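/- Let α = [a_1, a_2, a_3, …] ∈ (0,1) be irrational, let A_a = [[a,1],[1,0]], and let K^s ⊂ ℝ² be the cone orthogonal to K^u_{β₀} (for fixed β₀ ∈ (0,0.1)), which contains the vertical direction (0,1) and is mapped into its interior by each A_a⁻¹. Then the nested intersection E^s_α := ⋂_{n≥1} A_{a_1}⁻¹ ⋯ A_{a_n}⁻¹ (K^s) is a line through the origin of slope −1/α. -/

import Mathlib

/-- The stable cone `K^s = (K^u_{β₀})^⊥`, the rotation of `K^u_{β₀}` by `π/2`:
`K^s = { c₁(β₀,1) + c₂(−(1+2β₀),1) : c₁c₂ ≥ 0 }`. It contains the vertical direction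
`(0,1)` and is mapped into its interior by each `A_a⁻¹`. -/
def Ks (β : ℝ) : Set (Fin 2 → ℝ) :=
  {v | ∃ c₁ c₂ : ℝ, c₁ * c₂ ≥ 0 ∧ v = c₁ • ![β, 1] + c₂ • ![-(1 + 2 * β), 1]}

/-- The value of the finite continued fraction `[a₁,…,aₙ]`. -/
noncomputable def cfFin : List ℕ → ℝ
  | [] => 0
  | a :: l => 1 / ((a : ℝ) + cfFin l)

/-- `α = [a₁, a₂, …]`: the finite truncations of the continued fraction with partial
quotients `a 0 = a₁, a 1 = a₂, …` converge to `α`. -/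
def cfLim (a : ℕ → ℕ) (α : ℝ) : Prop :=
  Filter.Tendsto (fun n => cfFin (List.ofFn fun i : Fin n => a i)) Filter.atTop (nhds α)


namespace CF19
/-- matrix of a partial quotient -/
def Am (b : ℕ) : Matrix (Fin 2) (Fin 2) ℝ := !![(b:ℝ), 1; 1, 0]

/-- ((q n, q' n), (p n, p' n)) : numerators/denominators of convergents -/
noncomputable def R (a : ℕ → ℕ) : ℕ → (ℝ × ℝ) × (ℝ × ℝ)
  | 0 => ((1, 0), (0, 1))
  | n+1 => (((a n) * (R a n).1.1 + (R a n).1.2, (R a n).1.1),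
            ((a n) * (R a n).2.1 + (R a n).2.2, (R a n).2.1))

noncomputable def qq (a : ℕ → ℕ) (n : ℕ) : ℝ := (R a n).1.1
noncomputable def qq' (a : ℕ → ℕ) (n : ℕ) : ℝ := (R a n).1.2
noncomputable def pp (a : ℕ → ℕ) (n : ℕ) : ℝ := (R a n).2.1
noncomputable def pp' (a : ℕ → ℕ) (n : ℕ) : ℝ := (R a n).2.2

lemma qq_succ (a : ℕ → ℕ) (n : ℕ) : qq a (n+1) = (a n) * qq a n + qq' a n := rfl
lemma qq'_succ (a : ℕ → ℕ) (n : ℕ) : qq' a (n+1) = qq a n := rfl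
lemma pp_succ (a : ℕ → ℕ) (n : ℕ) : pp a (n+1) = (a n) * pp a n + pp' a n := rfl
lemma pp'_succ (a : ℕ → ℕ) (n : ℕ) : pp' a (n+1) = pp a n := rfl
lemma qq_zero (a : ℕ → ℕ) : qq a 0 = 1 := rfl
lemma qq'_zero (a : ℕ → ℕ) : qq' a 0 = 0 := rfl
lemma pp_zero (a : ℕ → ℕ) : pp a 0 = 0 := rfl
lemma pp'_zero (a : ℕ → ℕ) : pp' a 0 = 1 := rfl

lemma Pm_eq (a : ℕ → ℕ) (n : ℕ) :
    (List.ofFn fun i : Fin n => Am (a i)).prod = !![qq a n, qq' a n; pp a n, pp' a n] := by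
  induction n with
  | zero => simp [Matrix.one_fin_two, qq, qq', pp, pp', R]
  | succ n ih =>
      rw [List.ofFn_succ', List.concat_eq_append, List.prod_append, List.prod_cons,
        List.prod_nil, mul_one]
      simp only [Fin.coe_castSucc, Fin.val_last]
      rw [ih]
      simp only [Am, Matrix.mul_fin_two, qq_succ, qq'_succ, pp_succ, pp'_succ]
      congr 1 <;> ring

lemma Am_inv (b : ℕ) : (Am b)⁻¹ = !![0, 1; 1, -(b:ℝ)] := by
  apply Matrix.inv_eq_right_inv
  simp [Am, Matrix.mul_fin_two, Matrix.one_fin_two]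

lemma Nm_eq (a : ℕ → ℕ) (n : ℕ) :
    (List.ofFn fun i : Fin n => (Am (a i))⁻¹).prod =
      !![(-1)^n * pp' a n, -((-1)^n) * pp a n;
         -((-1)^n) * qq' a n, (-1)^n * qq a n] := by
  induction n with
  | zero =>
      simp [Matrix.one_fin_two, qq, qq', pp, pp', R]
  | succ n ih =>
      rw [List.ofFn_succ', List.concat_eq_append, List.prod_append, List.prod_cons,
        List.prod_nil, mul_one]
      simp only [Fin.coe_castSucc, Fin.val_last]
      rw [ih, Am_inv]
      simp only [Matrix.mul_fin_two, qq_succ, qq'_succ, pp_succ, pp'_succ, pow_succ]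
      congr 1 <;> ring

lemma basic (a : ℕ → ℕ) (ha : ∀ i, 1 ≤ a i) (n : ℕ) :
    1 ≤ qq a n ∧ 0 ≤ qq' a n ∧ qq' a n ≤ qq a n ∧ 0 ≤ pp a n ∧ 0 ≤ pp' a n ∧
      (n : ℝ) ≤ qq a n ∧ (1 ≤ n → 1 ≤ qq' a n) := by
  induction n with
  | zero =>
      simp [qq_zero, qq'_zero, pp_zero, pp'_zero]
  | succ n ih =>
      obtain ⟨h1, h2, h3, h4, h5, h6, h7⟩ := ih
      have hb : (1:ℝ) ≤ (a n : ℝ) := by exact_mod_cast ha n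
      have hq1 : qq a (n+1) = (a n) * qq a n + qq' a n := qq_succ a n
      refine ⟨?_, ?_, ?_, ?_, ?_, ?_, ?_⟩
      · rw [hq1]; nlinarith
      · rw [qq'_succ]; linarith
      · rw [qq'_succ, hq1]; nlinarith
      · rw [pp_succ]; nlinarith
      · rw [pp'_succ]; linarith
      · rcases Nat.eq_zero_or_pos n with h | h
        · subst h; rw [hq1, qq_zero, qq'_zero]; push_cast; nlinarith
        · have := h7 h
          rw [hq1]; push_cast; nlinarith
      · intro _; rw [qq'_succ]; linarith

lemma detPm (a : ℕ → ℕ) (n : ℕ) :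
    qq a n * pp' a n - qq' a n * pp a n = (-1)^n := by
  induction n with
  | zero => simp [qq_zero, qq'_zero, pp_zero, pp'_zero]
  | succ n ih =>
      rw [qq_succ, qq'_succ, pp_succ, pp'_succ, pow_succ]
      nlinarith [ih]

lemma cf_list (l : List ℕ) (hl : ∀ x ∈ l, 1 ≤ x) :
    0 < (l.map Am).prod 0 0 ∧ 0 ≤ (l.map Am).prod 1 0 ∧
      (l.map Am).prod 1 0 ≤ (l.map Am).prod 0 0 ∧
      cfFin l * (l.map Am).prod 0 0 = (l.map Am).prod 1 0 := by
  induction l with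
  | nil => simp [cfFin, Matrix.one_apply]
  | cons b l ih =>
      obtain ⟨h1, h2, h3, h4⟩ := ih (fun x hx => hl x (List.mem_cons_of_mem b hx))
      set M := (l.map Am).prod with hM
      have hb : (1:ℝ) ≤ (b : ℝ) := by exact_mod_cast hl b List.mem_cons_self
      have hcfl : cfFin l = M 1 0 / M 0 0 := by field_simp; linarith [h4]
      have hcf_nonneg : 0 ≤ cfFin l := by rw [hcfl]; positivity
      have hprod : ((b :: l).map Am).prod = Am b * M := by
        simp [hM]
      have e00 : ((b :: l).map Am).prod 0 0 = (b:ℝ) * M 0 0 + M 1 0 := by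
        rw [hprod]; simp [Am, Matrix.mul_apply, Fin.sum_univ_two]
      have e10 : ((b :: l).map Am).prod 1 0 = M 0 0 := by
        rw [hprod]; simp [Am, Matrix.mul_apply, Fin.sum_univ_two]
      have hpos : (0:ℝ) < (b:ℝ) + cfFin l := by linarith
      refine ⟨?_, ?_, ?_, ?_⟩
      · rw [e00]; nlinarith
      · rw [e10]; linarith
      · rw [e00, e10]; nlinarith
      · rw [e00, e10]
        show (1 / ((b:ℝ) + cfFin l)) * _ = _
        rw [div_mul_eq_mul_div, one_mul]
        rw [div_eq_iff (ne_of_gt hpos)]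
        nlinarith [h4]

lemma cf_conv (a : ℕ → ℕ) (ha : ∀ i, 1 ≤ a i) (n : ℕ) :
    cfFin (List.ofFn fun i : Fin n => a i) = pp a n / qq a n := by
  have hmap : (List.ofFn fun i : Fin n => a i).map Am
      = List.ofFn fun i : Fin n => Am (a i) := by
    rw [List.map_ofFn]; rfl
  have h := cf_list (List.ofFn fun i : Fin n => a i)
    (by intro x hx; rw [List.mem_ofFn] at hx; obtain ⟨i, rfl⟩ := hx; exact ha i)
  rw [hmap, Pm_eq] at h
  have h00 : (!![qq a n, qq' a n; pp a n, pp' a n] : Matrix (Fin 2) (Fin 2) ℝ) 0 0 = qq a n := by simp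
  have h10 : (!![qq a n, qq' a n; pp a n, pp' a n] : Matrix (Fin 2) (Fin 2) ℝ) 1 0 = pp a n := by simp
  rw [h00, h10] at h
  obtain ⟨h1, _, _, h4⟩ := h
  field_simp
  linarith [h4]

/-- s n = (α qₙ − pₙ)(−1)ⁿ -/
noncomputable def sv (a : ℕ → ℕ) (α : ℝ) (n : ℕ) : ℝ := (α * qq a n - pp a n) * (-1)^n

lemma key_s (a : ℕ → ℕ) (ha : ∀ i, 1 ≤ a i) (α : ℝ)
    (hcf : Filter.Tendsto (fun n => cfFin (List.ofFn fun i : Fin n => a i))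
      Filter.atTop (nhds α)) (n : ℕ) :
    0 < sv a α n ∧ sv a α n < 1 / qq a (n+1) := by
  have hq : ∀ m, 0 < qq a m := fun m => lt_of_lt_of_le one_pos (basic a ha m).1
  have hc : Filter.Tendsto (fun n => pp a n / qq a n) Filter.atTop (nhds α) := by
    have : (fun n => cfFin (List.ofFn fun i : Fin n => a i))
        = fun n => pp a n / qq a n := funext fun n => cf_conv a ha n
    rwa [this] at hcf
  have hdiff : ∀ m, pp a (m+1) * qq a m - pp a m * qq a (m+1) = (-1)^m := by
    intro m
    have h := detPm a (m+1)
    rw [qq'_succ, pp'_succ, pow_succ] at h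
    nlinarith [h]
  have hd1 : ∀ m, pp a (m+1)/qq a (m+1) - pp a m/qq a m = (-1)^m / (qq a m * qq a (m+1)) := by
    intro m
    rw [div_sub_div _ _ (ne_of_gt (hq (m+1))) (ne_of_gt (hq m)),
      div_eq_div_iff (mul_pos (hq (m+1)) (hq m)).ne' (mul_pos (hq m) (hq (m+1))).ne']
    linear_combination (qq a m * qq a (m+1)) * hdiff m
  have hd2 : ∀ m, 0 < (pp a (m+2)/qq a (m+2) - pp a m/qq a m) * (-1)^m := by
    intro m
    have hstep : pp a (m+2)/qq a (m+2) - pp a m/qq a m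
        = (-1)^(m+1) / (qq a (m+1) * qq a (m+2)) + (-1)^m / (qq a m * qq a (m+1)) := by
      rw [← hd1 (m+1), ← hd1 m]; ring
    have key : (((-1:ℝ)^(m+1) / (qq a (m+1) * qq a (m+2)) + (-1)^m / (qq a m * qq a (m+1)))) * (-1)^m
        = 1/(qq a m * qq a (m+1)) - 1/(qq a (m+1) * qq a (m+2)) := by
      rcases Nat.even_or_odd m with h | h
      · rw [Even.neg_one_pow h, Odd.neg_one_pow (Even.add_one h)]; ring
      · rw [Odd.neg_one_pow h, Even.neg_one_pow (Odd.add_one h)]; ring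
    rw [hstep, key, sub_pos]
    have hq02 : qq a m < qq a (m+2) := by
      have h1 : qq a (m+2) = (a (m+1)) * qq a (m+1) + qq a m := by
        rw [qq_succ, qq'_succ]
      have hb : (1:ℝ) ≤ (a (m+1) : ℝ) := by exact_mod_cast ha (m+1)
      nlinarith [hq (m+1)]
    apply one_div_lt_one_div_of_lt (mul_pos (hq m) (hq (m+1)))
    nlinarith [hq m, hq (m+1), hq (m+2)]
  have hd3 : ∀ m k, 0 ≤ (pp a (m+2+2*k)/qq a (m+2+2*k) - pp a (m+2)/qq a (m+2)) * (-1)^m := by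
    intro m k
    induction k with
    | zero => simp
    | succ k ih =>
        have h := hd2 (m+2+2*k)
        have hpow : ((-1:ℝ))^(m+2+2*k) = (-1)^m := by
          rw [show m+2+2*k = m + 2*(k+1) by ring, pow_add, pow_mul]; norm_num
        rw [hpow] at h
        have harr : m+2+2*(k+1) = (m+2+2*k)+2 := by ring
        rw [harr]
        nlinarith [ih, h]
  have hmono : ∀ m, Filter.Tendsto (fun k : ℕ => m+2+2*k) Filter.atTop Filter.atTop := by
    intro m
    apply Filter.tendsto_atTop_atTop.2
    intro b
    exact ⟨b, fun x hx => by omega⟩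
  have hlim : ∀ m, (pp a (m+2)/qq a (m+2) - pp a m/qq a m) * (-1)^m
      ≤ (α - pp a m/qq a m) * (-1)^m := by
    intro m
    have htend : Filter.Tendsto
        (fun k : ℕ => (pp a (m+2+2*k)/qq a (m+2+2*k) - pp a m/qq a m) * (-1)^m)
        Filter.atTop (nhds ((α - pp a m/qq a m) * (-1)^m)) :=
      (Filter.Tendsto.sub_const (hc.comp (hmono m)) _).mul_const _
    apply ge_of_tendsto htend
    filter_upwards with k
    have h1 := hd3 m k
    nlinarith [h1]
  have hsign : ∀ m, 0 < (α - pp a m/qq a m) * (-1)^m :=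
    fun m => lt_of_lt_of_le (hd2 m) (hlim m)
  have hsq : ((-1:ℝ)^n) * ((-1)^n) = 1 := by
    rw [← pow_add]; exact Even.neg_one_pow ⟨n, by ring⟩
  have hupper : (α - pp a n/qq a n) * (-1)^n < 1/(qq a n * qq a (n+1)) := by
    have h1 := hsign (n+1)
    rw [pow_succ] at h1
    have h2 := hd1 n
    have h3 : (pp a (n+1)/qq a (n+1) - pp a n/qq a n) * (-1)^n
        = 1/(qq a n * qq a (n+1)) := by
      rw [h2, div_mul_eq_mul_div, hsq]
    nlinarith [h1, h3]
  have hrel : α * qq a n - pp a n = (α - pp a n/qq a n) * qq a n := by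
    rw [sub_mul, div_mul_cancel₀ _ (ne_of_gt (hq n))]
  constructor
  · show 0 < (α * qq a n - pp a n) * (-1)^n
    rw [hrel]
    nlinarith [mul_pos (hsign n) (hq n)]
  · show (α * qq a n - pp a n) * (-1)^n < 1 / qq a (n+1)
    rw [hrel]
    have step : ((α - pp a n/qq a n) * (-1)^n) * qq a n < (1/(qq a n * qq a (n+1))) * qq a n :=
      mul_lt_mul_of_pos_right hupper (hq n)
    have heq : (1/(qq a n * qq a (n+1))) * qq a n = 1 / qq a (n+1) := by
      rw [one_div, mul_inv, mul_comm, ← mul_assoc, mul_inv_cancel₀ (ne_of_gt (hq n)), one_mul, one_div]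
    rw [heq] at step
    nlinarith [step]

lemma NmulVec (a : ℕ → ℕ) (n : ℕ) (x y : ℝ) :
    ((List.ofFn fun i : Fin n => (Am (a i))⁻¹).prod).mulVec ![x, y]
      = ![(-1)^n * (pp' a n * x - pp a n * y), (-1)^n * (qq a n * y - qq' a n * x)] := by
  rw [Nm_eq]
  funext i
  fin_cases i <;>
    simp [Matrix.mulVec, dotProduct, Fin.sum_univ_two] <;> ring

lemma sv_rec (a : ℕ → ℕ) (α : ℝ) (n : ℕ) :
    sv a α n = sv a α (n+2) + (a (n+1)) * sv a α (n+1) := by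
  show (α * qq a n - pp a n) * (-1)^n = _
  have h2 : qq a (n+2) = (a (n+1)) * qq a (n+1) + qq a n := by rw [qq_succ, qq'_succ]
  have h3 : pp a (n+2) = (a (n+1)) * pp a (n+1) + pp a n := by rw [pp_succ, pp'_succ]
  show _ = (α * qq a (n+2) - pp a (n+2)) * (-1)^(n+2) + _ * ((α * qq a (n+1) - pp a (n+1)) * (-1)^(n+1))
  rw [h2, h3, pow_succ, pow_succ]
  ring

lemma sv_def (a : ℕ → ℕ) (α : ℝ) (n : ℕ) :
    sv a α n = (α * qq a n - pp a n) * (-1)^n := rfl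

lemma NmulVec' (a : ℕ → ℕ) (n : ℕ) (x y : ℝ) :
    ((List.ofFn fun i : Fin n => (!![(a i : ℝ), 1; 1, 0])⁻¹).prod).mulVec ![x, y]
      = ![(-1)^n * (pp' a n * x - pp a n * y), (-1)^n * (qq a n * y - qq' a n * x)] :=
  NmulVec a n x y

lemma sign_cases {c1 c2 : ℝ} (hc : c1 * c2 ≥ 0) :
    (0 ≤ c1 ∧ 0 ≤ c2) ∨ (c1 ≤ 0 ∧ c2 ≤ 0) := by
  rcases le_total 0 c1 with h1 | h1 <;> rcases le_total 0 c2 with h2 | h2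
  · exact Or.inl ⟨h1, h2⟩
  · have : c1 * c2 ≤ 0 := mul_nonpos_of_nonneg_of_nonpos h1 h2
    have h0 : c1 * c2 = 0 := le_antisymm this hc
    rcases mul_eq_zero.1 h0 with h | h
    · exact Or.inr ⟨le_of_eq h, h2⟩
    · exact Or.inl ⟨h1, h.ge⟩
  · have : c1 * c2 ≤ 0 := mul_nonpos_of_nonpos_of_nonneg h1 h2
    have h0 : c1 * c2 = 0 := le_antisymm this hc
    rcases mul_eq_zero.1 h0 with h | h
    · exact Or.inl ⟨h.ge, h2⟩
    · exact Or.inr ⟨h1, le_of_eq h⟩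
  · exact Or.inr ⟨h1, h2⟩

end CF19

set_option maxHeartbeats 2000000 in
open CF19 in
/-- For an irrational `α = [a₁,a₂,…] ∈ (0,1)` and `β₀ ∈ (0,0.1)`, the
nested intersection `E^s_α = ⋂_{n≥1} A_{a₁}⁻¹ ⋯ A_{aₙ}⁻¹ (K^s)` is the line through the
origin of slope `−1/α`, i.e. the span of `(−α, 1)ᵀ`. -/
theorem stmt19 (β₀ : ℝ) (hβ : β₀ ∈ Set.Ioo (0 : ℝ) 0.1)
    (α : ℝ) (hα : α ∈ Set.Ioo (0 : ℝ) 1) (hirr : Irrational α)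
    (a : ℕ → ℕ) (ha : ∀ i, 1 ≤ a i) (hcf : cfLim a α) :
    (⋂ n : ℕ,
        (fun v => ((List.ofFn fun i : Fin (n + 1) =>
          (!![(a i : ℝ), 1; 1, 0])⁻¹).prod.mulVec v)) '' Ks β₀)
      = Set.range (fun c : ℝ => c • ![-α, (1 : ℝ)]) := by
  obtain ⟨hβ0, hβ1⟩ := hβ
  have hβ10 : β₀ < 1/10 := by norm_num at hβ1; exact hβ1
  have hkey : ∀ n, 0 < sv a α n ∧ sv a α n < 1 / qq a (n+1) := key_s a ha α hcf
  have hq : ∀ m, 0 < qq a m := fun m => lt_of_lt_of_le one_pos (basic a ha m).1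
  have hqn : ∀ m : ℕ, (m : ℝ) ≤ qq a m := fun m => (basic a ha m).2.2.2.2.2.1
  have hqmono : ∀ m, qq a m ≤ qq a (m+1) := by
    intro m
    have h := (basic a ha (m+1)).2.2.1
    rwa [qq'_succ] at h
  have hss : ∀ n, sv a α (n+1) < sv a α n := by
    intro n
    have h := sv_rec a α n
    have hb : (1:ℝ) ≤ (a (n+1):ℝ) := by exact_mod_cast ha (n+1)
    nlinarith [(hkey (n+2)).1, (hkey (n+1)).1]
  have hdet : ∀ n, qq a (n+1) * pp a n - qq a n * pp a (n+1) = (-1)^(n+1) := by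
    intro n
    have h := detPm a (n+1)
    rwa [qq'_succ, pp'_succ] at h
  ext v
  simp only [Set.mem_iInter, Set.mem_image, Set.mem_range]
  constructor
  · intro h
    have hbound : ∀ n : ℕ, |v 0 + α * v 1| * ((n:ℝ)+1)^2 ≤ 3 * |v 1| := by
      intro n
      obtain ⟨w, ⟨c1, c2, hc, hw⟩, hv⟩ := h n
      rw [hw, Matrix.mulVec_add, Matrix.mulVec_smul, Matrix.mulVec_smul,
        NmulVec', NmulVec', pp'_succ, qq'_succ] at hv
      have hv0 : v 0 = c1 * ((-1)^(n+1) * (pp a n * β₀ - pp a (n+1) * 1))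
          + c2 * ((-1)^(n+1) * (pp a n * (-(1+2*β₀)) - pp a (n+1) * 1)) := by
        rw [← hv]; simp
      have hv1 : v 1 = c1 * ((-1)^(n+1) * (qq a (n+1) * 1 - qq a n * β₀))
          + c2 * ((-1)^(n+1) * (qq a (n+1) * 1 - qq a n * (-(1+2*β₀)))) := by
        rw [← hv]; simp
      have h1pos := (hkey n).1
      have h2pos := (hkey (n+1)).1
      have hlt := hss n
      have hklt := (hkey n).2
      have hsum : v 0 + α * v 1
          = c1 * (sv a α (n+1) + β₀ * sv a α n)
            + c2 * (sv a α (n+1) - (1+2*β₀) * sv a α n) := by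
        rw [hv0, hv1, sv_def, sv_def, pow_succ]; ring
      have hfact : v 1 = (-1)^(n+1) * (c1 * (qq a (n+1) - β₀ * qq a n)
          + c2 * (qq a (n+1) + (1+2*β₀) * qq a n)) := by
        rw [hv1]; ring
      have hA : |sv a α (n+1) + β₀ * sv a α n| ≤ (1+2*β₀) * sv a α n := by
        rw [abs_le]; constructor <;> nlinarith
      have hB : |sv a α (n+1) - (1+2*β₀) * sv a α n| ≤ (1+2*β₀) * sv a α n := by
        rw [abs_le]; constructor <;> nlinarith
      have hnum : |v 0 + α * v 1| ≤ (|c1|+|c2|) * ((1+2*β₀) * sv a α n) := by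
        rw [hsum]
        calc |c1 * (sv a α (n+1) + β₀ * sv a α n)
              + c2 * (sv a α (n+1) - (1+2*β₀) * sv a α n)|
            ≤ |c1 * (sv a α (n+1) + β₀ * sv a α n)|
              + |c2 * (sv a α (n+1) - (1+2*β₀) * sv a α n)| := abs_add_le _ _
          _ = |c1| * |sv a α (n+1) + β₀ * sv a α n|
              + |c2| * |sv a α (n+1) - (1+2*β₀) * sv a α n| := by rw [abs_mul, abs_mul]
          _ ≤ (|c1|+|c2|) * ((1+2*β₀) * sv a α n) := by
              nlinarith [abs_nonneg c1, abs_nonneg c2, hA, hB]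
      have hden : (|c1|+|c2|) * ((1-β₀) * qq a (n+1)) ≤ |v 1| := by
        rw [hfact, abs_mul]
        have habs1 : |(-1:ℝ)^(n+1)| = 1 := by
          rw [abs_pow, abs_neg, abs_one, one_pow]
        rw [habs1, one_mul]
        have hq1 := hq n
        have hq2 := hq (n+1)
        have hqm := hqmono n
        have hD1 : (1-β₀) * qq a (n+1) ≤ qq a (n+1) - β₀ * qq a n := by nlinarith
        have hD2 : (1-β₀) * qq a (n+1) ≤ qq a (n+1) + (1+2*β₀) * qq a n := by nlinarith
        have hP1' : (0:ℝ) ≤ qq a (n+1) - β₀ * qq a n := by nlinarith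
        have hP2' : (0:ℝ) ≤ qq a (n+1) + (1+2*β₀) * qq a n := by nlinarith
        rcases sign_cases hc with ⟨hc1, hc2⟩ | ⟨hc1, hc2⟩
        · rw [abs_of_nonneg hc1, abs_of_nonneg hc2,
            abs_of_nonneg (add_nonneg (mul_nonneg hc1 hP1') (mul_nonneg hc2 hP2'))]
          nlinarith [mul_le_mul_of_nonneg_left hD1 hc1, mul_le_mul_of_nonneg_left hD2 hc2]
        · rw [abs_of_nonpos hc1, abs_of_nonpos hc2,
            abs_of_nonpos (add_nonpos (mul_nonpos_of_nonpos_of_nonneg hc1 hP1')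
              (mul_nonpos_of_nonpos_of_nonneg hc2 hP2'))]
          nlinarith [mul_le_mul_of_nonpos_left hD1 hc1, mul_le_mul_of_nonpos_left hD2 hc2]
      -- assemble
      have hQn : (n:ℝ) + 1 ≤ qq a (n+1) := by
        have := hqn (n+1); push_cast at this ⊢; linarith
      have hsvQ : sv a α n * qq a (n+1) ≤ 1 := by
        have h2 := hq (n+1)
        have := mul_lt_mul_of_pos_right hklt h2
        rw [div_mul_cancel₀ 1 (ne_of_gt h2)] at this
        linarith
      have hS : 0 ≤ |c1| + |c2| := by positivity
      have habs0 : 0 ≤ |v 0 + α * v 1| := abs_nonneg _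
      calc |v 0 + α * v 1| * ((n:ℝ)+1)^2
          ≤ ((|c1|+|c2|) * ((1+2*β₀) * sv a α n)) * ((n:ℝ)+1)^2 := by
            apply mul_le_mul_of_nonneg_right hnum (by positivity)
        _ ≤ ((|c1|+|c2|) * ((1+2*β₀) * sv a α n)) * (qq a (n+1))^2 := by
            apply mul_le_mul_of_nonneg_left
              (pow_le_pow_left₀ (by positivity) hQn 2)
              (mul_nonneg hS (mul_nonneg (by linarith) h1pos.le))
        _ = (1+2*β₀) * (sv a α n * qq a (n+1)) * ((|c1|+|c2|) * qq a (n+1)) := by ring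
        _ ≤ (1+2*β₀) * 1 * ((|c1|+|c2|) * qq a (n+1)) := by
            have hstep := mul_le_mul_of_nonneg_left
              (mul_le_mul_of_nonneg_right hsvQ (mul_nonneg hS (hq (n+1)).le))
              (by linarith : (0:ℝ) ≤ 1+2*β₀)
            nlinarith [hstep]
        _ ≤ 3 * ((|c1|+|c2|) * ((1-β₀) * qq a (n+1))) := by
            nlinarith [mul_nonneg hS (hq (n+1)).le]
        _ ≤ 3 * |v 1| := by nlinarith [hden]
    have hzero : v 0 + α * v 1 = 0 := by
      by_contra h0
      have hΔ : 0 < |v 0 + α * v 1| := abs_pos.2 h0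
      obtain ⟨n, hn⟩ := exists_nat_gt (3 * |v 1| / |v 0 + α * v 1|)
      have hb := hbound n
      have h3 : 3 * |v 1| < (n:ℝ) * |v 0 + α * v 1| := by
        rw [div_lt_iff₀ hΔ] at hn; linarith
      nlinarith [hΔ, sq_nonneg ((n:ℝ)+1), sq_nonneg (n:ℝ)]
    refine ⟨v 1, funext fun i => ?_⟩
    fin_cases i
    · show v 1 * (-α) = v 0
      linarith
    · show v 1 * 1 = v 1
      ring
  · rintro ⟨c, rfl⟩ n
    set Q2 := qq a (n+1) with hQ2
    set Q1 := qq a n with hQ1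
    set P2 := pp a (n+1) with hP2
    set P1 := pp a n with hP1
    refine ⟨![c * (-(α * Q2 - P2)), c * (-(α * Q1 - P1))], ?_, ?_⟩
    · -- membership in Ks
      refine ⟨(c * (-(α * Q2 - P2)) + (1+2*β₀) * (c * (-(α * Q1 - P1)))) / (1+3*β₀),
        (β₀ * (c * (-(α * Q1 - P1))) - c * (-(α * Q2 - P2))) / (1+3*β₀), ?_, ?_⟩
      · -- product nonneg
        rw [ge_iff_le, div_mul_div_comm]
        apply div_nonneg _ (by positivity)
        have h1pos := (hkey n).1
        have h2pos := (hkey (n+1)).1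
        have hlt := hss n
        have hE2 : α * Q2 - P2 = sv a α (n+1) * (-1)^(n+1) := by
          rw [sv_def, hQ2, hP2]
          rcases Nat.even_or_odd (n+1) with hpar | hpar
          · rw [Even.neg_one_pow hpar]; ring
          · rw [Odd.neg_one_pow hpar]; ring
        have hE1 : α * Q1 - P1 = sv a α n * (-1)^n := by
          rw [sv_def, hQ1, hP1]
          rcases Nat.even_or_odd n with hpar | hpar
          · rw [Even.neg_one_pow hpar]; ring
          · rw [Odd.neg_one_pow hpar]; ring
        rw [hE1, hE2, pow_succ]
        have h2pos' : 0 < sv a α (1+n) := by rw [Nat.add_comm]; exact h2pos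
        have hlt' : sv a α (1+n) < sv a α n := by rw [Nat.add_comm]; exact hlt
        have hints := [0]
        rcases Nat.even_or_odd n with hpar | hpar <;>
          [rw [Even.neg_one_pow hpar]; rw [Odd.neg_one_pow hpar]] <;>
        · ring_nf
          nlinarith [mul_nonneg (sq_nonneg c) (mul_pos h2pos' (sub_pos.2 hlt')).le,
            mul_nonneg (sq_nonneg c) (mul_pos (mul_pos hβ0 h1pos) h2pos').le,
            mul_nonneg (sq_nonneg c) (mul_pos (mul_pos hβ0 h1pos) h1pos).le,
            mul_nonneg (sq_nonneg (c*β₀)) (mul_pos h1pos h1pos).le]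
      · funext i
        have h13 : (1+3*β₀) ≠ 0 := by positivity
        fin_cases i <;>
          simp [Pi.add_apply, Pi.smul_apply, smul_eq_mul] <;>
          field_simp <;> ring
    · -- mulVec equality
      show (List.ofFn fun i : Fin (n+1) => (!![(a i : ℝ), 1; 1, 0])⁻¹).prod.mulVec _ = _
      rw [NmulVec', pp'_succ, qq'_succ]
      have hd := hdet n
      rw [pow_succ] at hd
      funext i
      fin_cases i
      · show (-1:ℝ)^(n+1) * (pp a n * (c * (-(α * Q2 - P2))) - pp a (n+1) * (c * (-(α * Q1 - P1))))
          = c * (-α)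
        rw [hQ1, hQ2, hP1, hP2, pow_succ]
        rcases Nat.even_or_odd n with hpar | hpar
        · rw [Even.neg_one_pow hpar] at hd ⊢; linear_combination (c * α) * hd
        · rw [Odd.neg_one_pow hpar] at hd ⊢; linear_combination (-(c * α)) * hd
      · show (-1:ℝ)^(n+1) * (qq a (n+1) * (c * (-(α * Q1 - P1))) - qq a n * (c * (-(α * Q2 - P2))))
          = c * 1
        rw [hQ1, hQ2, hP1, hP2, pow_succ]
        rcases Nat.even_or_odd n with hpar | hpar
        · rw [Even.neg_one_pow hpar] at hd ⊢; linear_combination (-c) * hd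
        · rw [Odd.neg_one_pow hpar] at hd ⊢; linear_combination c * hd
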